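/- Let S be a string of length n ≥ 1. Then the set of minimal periods of the periodic prefixes of S, i.e., {per(P) : P is a prefix of S with |P| ≥ 2·per(P)}, has cardinality at most 2·⌊log₂ n⌋ + 2. -/

import Mathlib

variable {α : Type*}

/-- `ρ` is a period of `T`: `1 ≤ ρ` and `T[i] = T[i+ρ]` for all valid `i`. -/
def IsPeriod (T : List α) (ρ : ℕ) : Prop :=
  1 ≤ ρ ∧ ∀ i : ℕ, i + ρ < T.length → T[i]? = T[i + ρ]?

/-- The minimal period of `T`. -/
noncomputable def per (T : List α) : ℕ := sInf {ρ : ℕ | IsPeriod T ρ}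

/-- Auxiliary: `d` is a period of the first `L` symbols of `S` (positivity dropped). -/
def HasPd (S : List α) (L d : ℕ) : Prop := ∀ i : ℕ, i + d < L → S[i]? = S[i + d]?

lemma hasPd_mono {S : List α} {L L' d : ℕ} (h : HasPd S L d) (hL : L' ≤ L) :
    HasPd S L' d := fun i hi => h i (lt_of_lt_of_le hi hL)

lemma hasPd_chain {S : List α} {L d : ℕ} (h : HasPd S L d) (i k : ℕ)
    (hk : i + k * d < L) : S[i]? = S[i + k * d]? := by
  induction k with
  | zero => simp
  | succ k ih =>
    have e : i + (k + 1) * d = i + k * d + d := by ring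
    rw [e] at hk ⊢
    rw [ih (by omega)]
    exact h (i + k * d) hk

lemma hasPd_prop {S : List α} {L m c g : ℕ} (hc : HasPd S L c) (hg : HasPd S m g)
    (hm : c + g ≤ m) (hc0 : 0 < c) : HasPd S L g := by
  intro j hj
  have h1 := hasPd_chain hc (j % c) (j / c) (by rw [Nat.mod_add_div']; omega)
  have h2 := hasPd_chain hc (j % c + g) (j / c)
    (by have := Nat.mod_add_div' j c; omega)
  have h3 : S[j % c]? = S[j % c + g]? :=
    hg _ (by have := Nat.mod_lt j hc0; omega)
  have e1 : j % c + j / c * c = j := Nat.mod_add_div' j c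
  have e2 : j % c + g + j / c * c = j + g := by omega
  rw [e1] at h1
  rw [e2] at h2
  exact h1.symm.trans (h3.trans h2)

lemma hasPd_fw {S : List α} : ∀ q p L : ℕ, 0 < p → p ≤ q → p + q ≤ L →
    HasPd S L p → HasPd S L q → HasPd S L (Nat.gcd p q) := by
  intro q
  induction q using Nat.strong_induction_on with
  | _ q ih =>
    intro p L hp hpq hL hP hQ
    rcases eq_or_lt_of_le hpq with heq | hlt
    · subst heq
      simpa [Nat.gcd_self] using hQ
    · have hq' : 0 < q - p := by omega
      have h1 : HasPd S (L - p) (q - p) := by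
        intro j hj
        have e1 := hQ j (by omega)
        have e2 := hP (j + (q - p)) (by omega)
        have e : j + (q - p) + p = j + q := by omega
        rw [e] at e2
        exact e1.trans e2.symm
      have h2 : HasPd S (L - p) p := fun i hi => hP i (by omega)
      have hg : HasPd S (L - p) (Nat.gcd p (q - p)) := by
        rcases le_or_gt p (q - p) with h | h
        · exact ih (q - p) (by omega) p (L - p) hp h (by omega) h2 h1
        · have := ih p (by omega) (q - p) (L - p) hq' (le_of_lt h) (by omega) h1 h2
          rwa [Nat.gcd_comm] at this
      have hgq : Nat.gcd p (q - p) = Nat.gcd p q := Nat.gcd_sub_self_right (le_of_lt hlt)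
      have hgle : Nat.gcd p (q - p) ≤ q - p := Nat.gcd_le_right _ hq'
      have := hasPd_prop hP hg (by omega) hp
      rwa [hgq] at this

lemma key (S : List α) {r1 r2 r3 : ℕ} (h1 : 0 < r1) (h12 : r1 < r2) (h23 : r2 < r3)
    (h31 : r3 < 2 * r1)
    (P1 : HasPd S (2 * r1) r1) (P2 : HasPd S (2 * r2) r2) (P3 : HasPd S (2 * r3) r3)
    (M1 : ∀ d, 0 < d → d < r1 → ¬ HasPd S (2 * r1) d) : False := by
  set a := r2 - r1 with ha_def
  set c := r3 - r2 with hc_def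
  have ha : 0 < a := by omega
  have hc : 0 < c := by omega
  have hA : HasPd S r1 a := by
    intro j hj
    have e1 := P2 j (by omega)
    have e2 := P1 (j + a) (by omega)
    have e : j + a + r1 = j + r2 := by omega
    rw [e] at e2
    exact e1.trans e2.symm
  have hC : HasPd S r2 c := by
    intro j hj
    have e1 := P3 j (by omega)
    have e2 := P2 (j + c) (by omega)
    have e : j + c + r2 = j + r3 := by omega
    rw [e] at e2
    exact e1.trans e2.symm
  have hCa : HasPd S r1 c := hasPd_mono hC (by omega)
  set g := Nat.gcd a c with hg_def
  have hG1 : HasPd S r1 g := by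
    rcases le_or_gt a c with h | h
    · exact hasPd_fw c a r1 ha h (by omega) hA hCa
    · have := hasPd_fw a c r1 hc (le_of_lt h) (by omega) hCa hA
      rwa [Nat.gcd_comm] at this
  have hga : g ≤ a := Nat.gcd_le_left c ha
  have hG2 : HasPd S r2 g := hasPd_prop hC hG1 (by omega) hc
  have hg1 : 0 < g := Nat.gcd_pos_of_pos_left c ha
  apply M1 g hg1 (by omega)
  intro j hj
  by_cases hcase : j + g < r2
  · exact hG2 j hcase
  · have hj1 : r1 ≤ j := by omega
    have e1 := P1 (j - r1) (by omega)
    have e2 := P1 (j + g - r1) (by omega)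
    have eg := hG2 (j - r1) (by omega)
    have E1 : j - r1 + r1 = j := by omega
    have E2 : j + g - r1 + r1 = j + g := by omega
    have E3 : j - r1 + g = j + g - r1 := by omega
    rw [E1] at e1
    rw [E2] at e2
    rw [E3] at eg
    exact e1.symm.trans (eg.trans e2)

lemma isPeriod_take_iff (S : List α) {p : ℕ} (hpn : p ≤ S.length) (d : ℕ) :
    IsPeriod (S.take p) d ↔ (1 ≤ d ∧ HasPd S p d) := by
  have hlen : (S.take p).length = p := by
    rw [List.length_take]; omega
  constructor
  · rintro ⟨hd, h⟩
    refine ⟨hd, fun i hi => ?_⟩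
    have := h i (by omega)
    rwa [List.getElem?_take_of_lt (by omega), List.getElem?_take_of_lt (by omega)] at this
  · rintro ⟨hd, h⟩
    refine ⟨hd, fun i hi => ?_⟩
    rw [hlen] at hi
    rw [List.getElem?_take_of_lt (by omega), List.getElem?_take_of_lt (by omega)]
    exact h i hi

lemma mem_struct (S : List α) {p ρ : ℕ} (hp1 : 1 ≤ p) (hpn : p ≤ S.length)
    (hper : per (S.take p) = ρ) (h2 : 2 * ρ ≤ p) :
    0 < ρ ∧ 2 * ρ ≤ S.length ∧ HasPd S (2 * ρ) ρ ∧
      ∀ d, 0 < d → d < ρ → ¬ HasPd S (2 * ρ) d := by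
  have hne : {d : ℕ | IsPeriod (S.take p) d}.Nonempty := by
    refine ⟨p, hp1, fun i hi => ?_⟩
    rw [List.length_take] at hi
    omega
  have hmem := Nat.sInf_mem hne
  rw [show sInf {d : ℕ | IsPeriod (S.take p) d} = per (S.take p) from rfl, hper] at hmem
  rw [Set.mem_setOf_eq, isPeriod_take_iff S hpn] at hmem
  obtain ⟨hρ1, hρP⟩ := hmem
  have hρP2 : HasPd S (2 * ρ) ρ := hasPd_mono hρP h2
  refine ⟨hρ1, by omega, hρP2, ?_⟩
  intro d hd0 hdρ hHP
  have hGg : HasPd S (2 * ρ) (Nat.gcd d ρ) :=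
    hasPd_fw ρ d (2 * ρ) hd0 (le_of_lt hdρ) (by omega) hHP hρP2
  have hgled : Nat.gcd d ρ ≤ d := Nat.gcd_le_left ρ hd0
  have hPg : HasPd S p (Nat.gcd d ρ) := hasPd_prop hρP hGg (by omega) (by omega)
  have hgpos : 0 < Nat.gcd d ρ := Nat.gcd_pos_of_pos_left ρ hd0
  have hle : per (S.take p) ≤ Nat.gcd d ρ :=
    Nat.sInf_le ((isPeriod_take_iff S hpn _).mpr ⟨hgpos, hPg⟩)
  omega

theorem stmt0 (S : List α) (n : ℕ) (hn : S.length = n) (h1 : 1 ≤ n) :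
    {ρ : ℕ | ∃ p : ℕ, 1 ≤ p ∧ p ≤ n ∧ per (S.take p) = ρ ∧ 2 * ρ ≤ p}.Finite ∧
    {ρ : ℕ | ∃ p : ℕ, 1 ≤ p ∧ p ≤ n ∧ per (S.take p) = ρ ∧ 2 * ρ ≤ p}.ncard
      ≤ 2 * Nat.log 2 n + 2 := by
  classical
  set F := {ρ : ℕ | ∃ p : ℕ, 1 ≤ p ∧ p ≤ n ∧ per (S.take p) = ρ ∧ 2 * ρ ≤ p} with hF
  have hstruct : ∀ ρ ∈ F, 0 < ρ ∧ 2 * ρ ≤ S.length ∧ HasPd S (2 * ρ) ρ ∧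
      ∀ d, 0 < d → d < ρ → ¬ HasPd S (2 * ρ) d := by
    rintro ρ ⟨p, hp1, hpn, hper, h2⟩
    exact mem_struct S hp1 (by omega) hper h2
  set G := (Finset.range (Nat.log 2 n + 1)).biUnion
    (fun k => (Finset.Icc 1 n).filter (fun ρ => ρ ∈ F ∧ Nat.log 2 ρ = k)) with hG
  have hsub : F ⊆ ↑G := by
    intro ρ hρ
    obtain ⟨p, hp1, hpn, hper, h2⟩ := hρ
    have hρ0 : 0 < ρ := (hstruct ρ ⟨p, hp1, hpn, hper, h2⟩).1
    have hρn : ρ ≤ n := by omega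
    simp only [hG, Finset.coe_biUnion, Set.mem_iUnion, Finset.mem_coe, Finset.mem_filter,
      Finset.mem_range, Finset.mem_Icc]
    exact ⟨Nat.log 2 ρ, by have := Nat.log_mono_right (b := 2) hρn; omega,
      ⟨by omega, ⟨⟨p, hp1, hpn, hper, h2⟩, rfl⟩⟩⟩
  have hcard2 : ∀ k ∈ Finset.range (Nat.log 2 n + 1),
      ((Finset.Icc 1 n).filter (fun ρ => ρ ∈ F ∧ Nat.log 2 ρ = k)).card ≤ 2 := by
    intro k _
    by_contra hlt
    push_neg at hlt
    rw [Finset.two_lt_card_iff] at hlt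
    obtain ⟨x, y, z, hx, hy, hz, hxy, hxz, hyz⟩ := hlt
    simp only [Finset.mem_filter, Finset.mem_Icc] at hx hy hz
    -- three distinct elements of F with the same log
    have main : ∀ u v w : ℕ, u ∈ F → v ∈ F → w ∈ F → Nat.log 2 u = k → Nat.log 2 v = k →
        Nat.log 2 w = k → u < v → v < w → False := by
      intro u v w hu hv hw hlu hlv hlw huv hvw
      obtain ⟨hu0, hu2, hPu, hMu⟩ := hstruct u hu
      obtain ⟨hv0, hv2, hPv, hMv⟩ := hstruct v hv
      obtain ⟨hw0, hw2, hPw, hMw⟩ := hstruct w hw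
      have hlow : 2 ^ k ≤ u := by rw [← hlu]; exact Nat.pow_log_le_self 2 (by omega)
      have hhigh : w < 2 ^ (k + 1) := by
        rw [← hlw]; exact Nat.lt_pow_succ_log_self (by norm_num) w
      have hw2u : w < 2 * u := by
        have : (2 : ℕ) ^ (k + 1) = 2 * 2 ^ k := by ring
        omega
      exact key S hu0 huv hvw hw2u hPu hPv hPw hMu
    rcases lt_trichotomy x y with h1' | h1' | h1'
    · rcases lt_trichotomy y z with h2' | h2' | h2'
      · exact main x y z hx.2.1 hy.2.1 hz.2.1 hx.2.2 hy.2.2 hz.2.2 h1' h2'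
      · exact hyz h2'
      · rcases lt_trichotomy x z with h3' | h3' | h3'
        · exact main x z y hx.2.1 hz.2.1 hy.2.1 hx.2.2 hz.2.2 hy.2.2 h3' h2'
        · exact hxz h3'
        · exact main z x y hz.2.1 hx.2.1 hy.2.1 hz.2.2 hx.2.2 hy.2.2 h3' h1'
    · exact hxy h1'
    · rcases lt_trichotomy x z with h2' | h2' | h2'
      · exact main y x z hy.2.1 hx.2.1 hz.2.1 hy.2.2 hx.2.2 hz.2.2 h1' h2'
      · exact hxz h2'
      · rcases lt_trichotomy y z with h3' | h3' | h3'
        · exact main y z x hy.2.1 hz.2.1 hx.2.1 hy.2.2 hz.2.2 hx.2.2 h3' h2'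
        · exact hyz h3'
        · exact main z y x hz.2.1 hy.2.1 hx.2.1 hz.2.2 hy.2.2 hx.2.2 h3' h1'
  have hGcard : G.card ≤ 2 * Nat.log 2 n + 2 := by
    calc G.card ≤ ∑ k ∈ Finset.range (Nat.log 2 n + 1),
          ((Finset.Icc 1 n).filter (fun ρ => ρ ∈ F ∧ Nat.log 2 ρ = k)).card :=
        Finset.card_biUnion_le
      _ ≤ ∑ _k ∈ Finset.range (Nat.log 2 n + 1), 2 := Finset.sum_le_sum hcard2
      _ = 2 * Nat.log 2 n + 2 := by
        rw [Finset.sum_const, Finset.card_range, smul_eq_mul]; ring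
  have hfin : F.Finite := Set.Finite.subset G.finite_toSet hsub
  refine ⟨hfin, ?_⟩
  calc F.ncard ≤ (↑G : Set ℕ).ncard := Set.ncard_le_ncard hsub G.finite_toSet
    _ = G.card := Set.ncard_coe_finset G
    _ ≤ 2 * Nat.log 2 n + 2 := hGcard
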